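/- In any maximal position of the Game of Cycles on a cycle graph C_n (a polygon with n ≥ 3 edges), the number of unmarkable edges is even. -/
import Mathlib


/-- Legality of a position on the cycle graph `C_n`: edges are indexed by `0, …, n-1`,
edge `i` joining vertex `v_i` to `v_{(i+1) % n}`; `some true` means directed from `v_i`
toward `v_{(i+1) % n}`, `some false` the reverse, `none` undirected.  No vertex may be a sink
(both incident edges directed into it) or a source (both directed out of it). -/
def CycleLegal (n : ℕ) (pos : ℕ → Option Bool) : Prop :=
  ∀ i : ℕ, i < n →
    ¬(pos ((i + n - 1) % n) = some true ∧ pos i = some false) ∧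
    ¬(pos ((i + n - 1) % n) = some false ∧ pos i = some true)

lemma cycle_inv1 (n i : ℕ) (hn : 1 ≤ n) (hi : i < n) : ((i + n - 1) % n + 1) % n = i := by
  rcases i with _ | k
  · have h0 : 0 + n - 1 = n - 1 := by omega
    rw [h0, Nat.mod_eq_of_lt (show n - 1 < n by omega)]
    have : n - 1 + 1 = n := by omega
    rw [this, Nat.mod_self]
  · have h1 : (k + 1 + n - 1) % n = k := by
      have : k + 1 + n - 1 = k + n := by omega
      rw [this, Nat.add_mod_right, Nat.mod_eq_of_lt (show k < n by omega)]
    rw [h1, Nat.mod_eq_of_lt hi]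

lemma cycle_inv2 (n i : ℕ) (hn : 1 ≤ n) (hi : i < n) : ((i + 1) % n + n - 1) % n = i := by
  rcases Nat.lt_or_ge (i+1) n with h | h
  · rw [Nat.mod_eq_of_lt h]
    have : i + 1 + n - 1 = i + n := by omega
    rw [this, Nat.add_mod_right, Nat.mod_eq_of_lt hi]
  · have h2 : i + 1 = n := by omega
    rw [h2, Nat.mod_self]
    have h0 : 0 + n - 1 = n - 1 := by omega
    rw [h0, Nat.mod_eq_of_lt (show n - 1 < n by omega)]
    omega

lemma cycle_ne1 (n i : ℕ) (hn : 2 ≤ n) (hi : i < n) : (i + n - 1) % n ≠ i := by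
  rcases i with _ | k
  · have h0 : 0 + n - 1 = n - 1 := by omega
    rw [h0, Nat.mod_eq_of_lt (show n - 1 < n by omega)]; omega
  · have h1 : k + 1 + n - 1 = k + n := by omega
    rw [h1, Nat.add_mod_right, Nat.mod_eq_of_lt (show k < n by omega)]
    omega

lemma cycle_neighbor (n : ℕ) (hn : 3 ≤ n) (pos : ℕ → Option Bool) (hlegal : CycleLegal n pos)
    (i : ℕ) (hi : i < n) (b : Bool)
    (h : ¬ CycleLegal n (Function.update pos i (some b))) :
    pos ((i + n - 1) % n) = some (!b) ∨ pos ((i + 1) % n) = some (!b) := by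
  rw [CycleLegal] at h
  push_neg at h
  obtain ⟨j, hj, hviol⟩ := h
  have hviol2 : (Function.update pos i (some b) ((j + n - 1) % n) = some true ∧
      Function.update pos i (some b) j = some false) ∨
      (Function.update pos i (some b) ((j + n - 1) % n) = some false ∧
      Function.update pos i (some b) j = some true) := by tauto
  clear hviol
  rename' hviol2 => hviol
  set q := Function.update pos i (some b) with hq
  set a := (j + n - 1) % n with ha
  have hupd : ∀ k, q k = if k = i then some b else pos k := fun k => Function.update_apply ..
  have hji : j ≠ i ∨ a ≠ i := by
    by_contra hcon
    push_neg at hcon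
    exact cycle_ne1 n i (by omega) hi (hcon.1 ▸ hcon.2)
  by_cases hai : a = i
  · have hjval : j = (i + 1) % n := by
      have := cycle_inv1 n j (by omega) hj
      rw [← ha, hai] at this
      exact this.symm
    have hjne : j ≠ i := hji.resolve_right (by simp [hai])
    rw [hupd a, hupd j, if_pos hai, if_neg hjne] at hviol
    right
    rw [← hjval]
    rcases hviol with ⟨h1, h2⟩ | ⟨h1, h2⟩
    · cases b
      · simp at h1
      · simpa using h2
    · cases b
      · simpa using h2
      · simp at h1
  · by_cases hjeq : j = i
    · rw [hupd a, hupd j, if_neg hai, if_pos hjeq] at hviol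
      left
      rw [← hjeq]
      rcases hviol with ⟨h1, h2⟩ | ⟨h1, h2⟩
      · cases b
        · simpa using h1
        · simp at h2
      · cases b
        · simp at h2
        · simpa using h1
    · rw [hupd a, hupd j, if_neg hai, if_neg hjeq] at hviol
      have := hlegal j hj
      rw [← ha] at this
      tauto

/-- Auxiliary direction function: direction of a directed edge, or the direction of the
right neighbor for an undirected edge. -/
def dirAt (n : ℕ) (pos : ℕ → Option Bool) (k : ℕ) : Bool :=
  match pos k with
  | some c => c
  | none => decide (pos ((k + 1) % n) = some true)

lemma zmod2_add_self (x : ZMod 2) : x + x = 0 := CharTwo.add_self_eq_zero x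

lemma cycle_parity (n : ℕ) (hn : 1 ≤ n) (f : ℕ → Bool) :
    Even (((Finset.range n).filter fun i => f i ≠ f ((i + n - 1) % n)).card) := by
  suffices h : ((((Finset.range n).filter fun i => f i ≠ f ((i + n - 1) % n)).card : ℕ) : ZMod 2) = 0 by
    rwa [ZMod.natCast_eq_zero_iff, ← even_iff_two_dvd] at h
  rw [Finset.card_filter, Nat.cast_sum]
  have step : ∀ i ∈ Finset.range n,
      ((if f i ≠ f ((i + n - 1) % n) then (1:ℕ) else 0 : ℕ) : ZMod 2)
      = (if f i then (1:ZMod 2) else 0) + (if f ((i + n - 1) % n) then (1:ZMod 2) else 0) := by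
    intro i _
    cases hfi : f i <;> cases hfa : f ((i + n - 1) % n) <;> simp [hfi, hfa] <;> decide
  rw [Finset.sum_congr rfl step, Finset.sum_add_distrib]
  have hbij : (∑ i ∈ Finset.range n, if f ((i + n - 1) % n) then (1:ZMod 2) else 0)
      = ∑ i ∈ Finset.range n, if f i then (1:ZMod 2) else 0 := by
    apply Finset.sum_nbij' (fun i => (i + n - 1) % n) (fun i => (i + 1) % n)
    · intro a ha
      simp only [Finset.mem_range] at *
      exact Nat.mod_lt _ (by omega)
    · intro a ha
      simp only [Finset.mem_range] at *
      exact Nat.mod_lt _ (by omega)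
    · intro a ha
      simp only [Finset.mem_range] at ha
      exact cycle_inv1 n a hn ha
    · intro a ha
      simp only [Finset.mem_range] at ha
      exact cycle_inv2 n a hn ha
    · intro a _; rfl
  rw [hbij, zmod2_add_self]

lemma cycle_bridge (n : ℕ) (hn : 3 ≤ n) (pos : ℕ → Option Bool)
    (hlegal : CycleLegal n pos)
    (hmax : ∀ i : ℕ, i < n → pos i = none →
      ∀ b : Bool, ¬ CycleLegal n (Function.update pos i (some b)))
    (i : ℕ) (hi : i < n) :
    pos i = none ↔ dirAt n pos i ≠ dirAt n pos ((i + n - 1) % n) := by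
  have ha1 : ((i + n - 1) % n + 1) % n = i := cycle_inv1 n i (by omega) hi
  cases hpi : pos i with
  | none =>
    have h1 := cycle_neighbor n hn pos hlegal i hi true (hmax i hi hpi true)
    have h2 := cycle_neighbor n hn pos hlegal i hi false (hmax i hi hpi false)
    simp only [Bool.not_true, Bool.not_false] at h1 h2
    simp only [true_iff]
    rcases h1 with hA | hA <;> rcases h2 with hB | hB
    · rw [hA] at hB; simp at hB
    · simp [dirAt, hpi, hA, hB]
    · simp [dirAt, hpi, hA, hB]
    · rw [hA] at hB; simp at hB
  | some c =>
    have key : dirAt n pos i = dirAt n pos ((i + n - 1) % n) := by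
      cases hpa : pos ((i + n - 1) % n) with
      | none =>
        cases c <;> simp [dirAt, hpi, hpa, ha1]
      | some c' =>
        have hl := hlegal i hi
        rw [hpa, hpi] at hl
        cases c <;> cases c' <;> simp_all [dirAt]
    simp [key]

/-- In any maximal position of the Game of Cycles on the polygon `C_n` (`n ≥ 3`) — a legal
position in which every undirected edge is unmarkable, i.e. directing it either way would
create a sink or a source — the number of unmarkable edges is even. -/
theorem cycle_unmarkable_even (n : ℕ) (hn : 3 ≤ n) (pos : ℕ → Option Bool)
    (hlegal : CycleLegal n pos)
    (hmax : ∀ i : ℕ, i < n → pos i = none →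
      ∀ b : Bool, ¬ CycleLegal n (Function.update pos i (some b))) :
    Even (((Finset.range n).filter fun i => pos i = none).card) := by
  have hfilter : ((Finset.range n).filter fun i => pos i = none)
      = ((Finset.range n).filter fun i => dirAt n pos i ≠ dirAt n pos ((i + n - 1) % n)) := by
    apply Finset.filter_congr
    intro i hi
    simp only [Finset.mem_range] at hi
    simpa using cycle_bridge n hn pos hlegal hmax i hi
  rw [hfilter]
  exact cycle_parity n (by omega) (dirAt n pos)
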